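/- If R : ℓ∞ → ℓ∞ is a bounded linear operator with R[c₀] ⊆ c₀, then R = S₀ + S₁, where S₀ : ℓ∞ → ℓ∞ is a bounded linear operator given by a c₀-matrix and S₁ : ℓ∞ → ℓ∞ is a bounded linear operator with S₁ f = 0 for every f ∈ c₀. -/

import Mathlib

open Filter Topology

noncomputable section

/-- The Banach space `ℓ∞` of bounded real sequences with the sup norm. -/
abbrev ellInfty : Type := BoundedContinuousFunction ℕ ℝ

/-- `c₀`, the subspace of `ℓ∞` of sequences converging to `0`. -/
def czero : Submodule ℝ ellInfty where
  carrier := {f | Tendsto (⇑f) atTop (𝓝 (0 : ℝ))}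
  add_mem' := by
    intro a b ha hb
    have hab := ha.add hb
    simp only [add_zero] at hab
    exact hab
  zero_mem' := by
    show Tendsto _ _ _
    simp only [BoundedContinuousFunction.coe_zero]
    exact tendsto_const_nhds
  smul_mem' := by intro c f hf; simpa using hf.const_mul c

/-- `R : ℓ∞ → ℓ∞` is given by the `c₀`-matrix `b`: the rows of `b` are absolutely summable
with uniformly bounded `ℓ₁`-norms, the columns of `b` converge to `0`, and `R` acts by
matrix multiplication by `b`. -/
structure IsC0Matrix (R : ellInfty →L[ℝ] ellInfty) (b : ℕ → ℕ → ℝ) : Prop where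
  rows_summable : ∀ i, Summable fun j => |b i j|
  rows_bounded : ∃ C : ℝ, ∀ i, (∑' j, |b i j|) ≤ C
  cols_vanish : ∀ j, Tendsto (fun i => b i j) atTop (𝓝 (0 : ℝ))
  matrix_repr : ∀ f : ellInfty, ∀ i, R f i = ∑' j, b i j * f j

namespace S3Aux

/-- Build an element of `ℓ∞` from a bounded sequence. -/
def mkSeq (f : ℕ → ℝ) (C : ℝ) (h : ∀ k, |f k| ≤ C) : ellInfty :=
  BoundedContinuousFunction.ofNormedAddCommGroup f continuous_of_discreteTopology C
    (by simpa using h)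

@[simp] lemma mkSeq_apply (f : ℕ → ℝ) (C : ℝ) (h : ∀ k, |f k| ≤ C) (k : ℕ) :
    mkSeq f C h k = f k := rfl

lemma norm_mkSeq_le (f : ℕ → ℝ) (C : ℝ) (h : ∀ k, |f k| ≤ C) (hC : 0 ≤ C) :
    ‖mkSeq f C h‖ ≤ C :=
  BoundedContinuousFunction.norm_ofNormedAddCommGroup_le continuous_of_discreteTopology hC
    (by simpa using h)

/-- standard basis -/
def e (j : ℕ) : ellInfty :=
  mkSeq (fun k => if k = j then (1:ℝ) else 0) 1 (by intro k; split <;> simp)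

@[simp] lemma e_apply (j k : ℕ) : e j k = if k = j then (1:ℝ) else 0 := rfl

lemma e_mem_czero (j : ℕ) : e j ∈ czero := by
  have hev : (fun _ : ℕ => (0:ℝ)) =ᶠ[atTop] ⇑(e j) := by
    filter_upwards [eventually_gt_atTop j] with k hk
    simp [Nat.ne_of_gt hk]
  exact Tendsto.congr' hev tendsto_const_nhds

variable (R : ellInfty →L[ℝ] ellInfty)

def b (i j : ℕ) : ℝ := R (e j) i

lemma sign_mul_self (x : ℝ) : Real.sign x * x = |x| := by
  rcases lt_trichotomy x 0 with h | h | h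
  · rw [Real.sign_of_neg h, abs_of_neg h]; ring
  · simp [h]
  · rw [Real.sign_of_pos h, abs_of_pos h]; ring

lemma abs_sign_le (x : ℝ) : |Real.sign x| ≤ 1 := by
  rcases Real.sign_apply_eq x with h | h | h <;> rw [h] <;> norm_num

lemma row_sum_le (i n : ℕ) : ∑ j ∈ Finset.range n, |b R i j| ≤ ‖R‖ := by
  set c : ℕ → ℝ := fun j => Real.sign (b R i j) with hc
  set g : ellInfty := mkSeq (fun k => if k ∈ Finset.range n then c k else 0) 1
    (by intro k; split
        · exact abs_sign_le _
        · simp) with hg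
  have hgeq : g = ∑ j ∈ Finset.range n, c j • e j := by
    ext k
    simp only [BoundedContinuousFunction.coe_sum, Finset.sum_apply,
      BoundedContinuousFunction.coe_smul, Pi.smul_apply, e_apply, smul_eq_mul, hg, mkSeq_apply]
    rw [Finset.sum_congr rfl (fun j _ => by rw [mul_ite, mul_one, mul_zero])]
    simp [Finset.sum_ite_eq]
  have hR : R g i = ∑ j ∈ Finset.range n, |b R i j| := by
    rw [hgeq, map_sum]
    simp only [map_smul]
    rw [BoundedContinuousFunction.coe_sum, Finset.sum_apply]
    refine Finset.sum_congr rfl fun j _ => ?_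
    simpa [b, hc] using sign_mul_self (b R i j)
  have h1 : |R g i| ≤ ‖R g‖ := by
    simpa using (R g).norm_coe_le_norm i
  have h2 : ‖R g‖ ≤ ‖R‖ * ‖g‖ := R.le_opNorm g
  have h3 : ‖g‖ ≤ 1 := norm_mkSeq_le _ _ _ zero_le_one
  calc ∑ j ∈ Finset.range n, |b R i j| = R g i := hR.symm
    _ ≤ |R g i| := le_abs_self _
    _ ≤ ‖R‖ * ‖g‖ := h1.trans h2
    _ ≤ ‖R‖ * 1 := mul_le_mul_of_nonneg_left h3 (norm_nonneg R)
    _ = ‖R‖ := mul_one _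

lemma rows_summable (i : ℕ) : Summable fun j => |b R i j| :=
  summable_of_sum_range_le (fun _ => abs_nonneg _) (row_sum_le R i)

lemma row_tsum_le (i : ℕ) : (∑' j, |b R i j|) ≤ ‖R‖ :=
  Real.tsum_le_of_sum_range_le (fun _ => abs_nonneg _) (row_sum_le R i)

lemma summable_row_mul (i : ℕ) (f : ellInfty) : Summable fun j => b R i j * f j := by
  refine Summable.of_abs (Summable.of_nonneg_of_le (fun j => abs_nonneg _)
    (fun j => ?_) ((rows_summable R i).mul_right ‖f‖))
  rw [abs_mul]
  exact mul_le_mul_of_nonneg_left (by simpa using f.norm_coe_le_norm j) (abs_nonneg _)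

lemma tsum_bound (i : ℕ) (f : ellInfty) : |∑' j, b R i j * f j| ≤ ‖R‖ * ‖f‖ := by
  have hs : Summable fun j => ‖b R i j * f j‖ := by
    simpa only [Real.norm_eq_abs] using (summable_row_mul R i f).abs
  calc |∑' j, b R i j * f j| ≤ ∑' j, |b R i j * f j| := by
        simpa only [Real.norm_eq_abs] using
          norm_tsum_le_tsum_norm (f := fun j => b R i j * f j) hs
    _ ≤ ∑' j, |b R i j| * ‖f‖ := by
        refine Summable.tsum_le_tsum (fun j => ?_) ((summable_row_mul R i f).abs)
          ((rows_summable R i).mul_right ‖f‖)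
        rw [abs_mul]
        exact mul_le_mul_of_nonneg_left (by simpa using f.norm_coe_le_norm j) (abs_nonneg _)
    _ = (∑' j, |b R i j|) * ‖f‖ := tsum_mul_right
    _ ≤ ‖R‖ * ‖f‖ := mul_le_mul_of_nonneg_right (row_tsum_le R i) (norm_nonneg f)

def S0lin : ellInfty →ₗ[ℝ] ellInfty where
  toFun f := mkSeq (fun i => ∑' j, b R i j * f j) (‖R‖ * ‖f‖) (fun i => tsum_bound R i f)
  map_add' f g := by
    ext i
    show (∑' j, b R i j * (f + g) j) = (∑' j, b R i j * f j) + ∑' j, b R i j * g j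
    rw [show (fun j => b R i j * (f + g) j) = fun j => b R i j * f j + b R i j * g j from
      funext fun j => by rw [BoundedContinuousFunction.add_apply, mul_add]]
    exact Summable.tsum_add (summable_row_mul R i f) (summable_row_mul R i g)
  map_smul' c f := by
    ext i
    show (∑' j, b R i j * (c • f) j) = c * ∑' j, b R i j * f j
    rw [show (fun j => b R i j * (c • f) j) = fun j => c * (b R i j * f j) from
      funext fun j => by rw [BoundedContinuousFunction.coe_smul]; dsimp; ring]
    exact tsum_mul_left

def S0 : ellInfty →L[ℝ] ellInfty :=
  LinearMap.mkContinuous (S0lin R) ‖R‖ (fun f =>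
    norm_mkSeq_le _ _ (fun i => tsum_bound R i f)
      (mul_nonneg (norm_nonneg R) (norm_nonneg f)))

@[simp] lemma S0_apply (f : ellInfty) (i : ℕ) : S0 R f i = ∑' j, b R i j * f j := by
  simp only [S0]
  rfl

lemma S0_e (j : ℕ) : S0 R (e j) = R (e j) := by
  ext i
  rw [S0_apply]
  rw [tsum_eq_single j (fun k hk => by simp [hk])]
  simp [b]

def T (n : ℕ) (f : ellInfty) : ellInfty := ∑ j ∈ Finset.range n, f j • e j

lemma T_apply (n : ℕ) (f : ellInfty) (k : ℕ) :
    T n f k = if k ∈ Finset.range n then f k else 0 := by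
  simp only [T, BoundedContinuousFunction.coe_sum, Finset.sum_apply,
    BoundedContinuousFunction.coe_smul, Pi.smul_apply, e_apply, smul_eq_mul]
  rw [Finset.sum_congr rfl (fun j _ => by rw [mul_ite, mul_one, mul_zero])]
  simp [Finset.sum_ite_eq]

lemma tendsto_T (f : ellInfty) (hf : f ∈ czero) :
    Tendsto (fun n => T n f) atTop (𝓝 f) := by
  rw [Metric.tendsto_atTop]
  intro ε hε
  have hf' : Tendsto (⇑f) atTop (𝓝 0) := hf
  rw [Metric.tendsto_atTop] at hf'
  obtain ⟨N, hN⟩ := hf' (ε/2) (by linarith)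
  refine ⟨N, fun n hn => ?_⟩
  have hb : ∀ k, ‖(T n f - f) k‖ ≤ ε/2 := by
    intro k
    rw [BoundedContinuousFunction.sub_apply, T_apply]
    by_cases hk : k ∈ Finset.range n
    · simp [hk, le_of_lt (half_pos hε)]
    · have hk' : n ≤ k := by simpa [Finset.mem_range, not_lt] using hk
      simp only [hk, if_neg, zero_sub, norm_neg]
      have := hN k (le_trans hn hk')
      rw [Real.dist_eq, sub_zero] at this
      simpa using this.le
  have : dist (T n f) f ≤ ε/2 := by
    rw [dist_eq_norm]
    exact BoundedContinuousFunction.norm_le (le_of_lt (half_pos hε)) |>.2 hb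
  linarith

lemma S0_eq_on_czero (f : ellInfty) (hf : f ∈ czero) : S0 R f = R f := by
  have h1 : Tendsto (fun n => R (T n f)) atTop (𝓝 (R f)) :=
    (R.continuous.tendsto f).comp (tendsto_T f hf)
  have h2 : Tendsto (fun n => S0 R (T n f)) atTop (𝓝 (S0 R f)) :=
    ((S0 R).continuous.tendsto f).comp (tendsto_T f hf)
  have heq : ∀ n, R (T n f) = S0 R (T n f) := by
    intro n
    simp only [T, map_sum, map_smul]
    exact Finset.sum_congr rfl fun j _ => by rw [S0_e]
  exact tendsto_nhds_unique (h2.congr fun n => (heq n).symm) h1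

end S3Aux

/-- Every bounded operator on `ℓ∞` preserving `c₀` decomposes as the sum of an operator
given by a `c₀`-matrix and an operator vanishing on `c₀`. -/
theorem statement3 (R : ellInfty →L[ℝ] ellInfty)
    (h : ∀ f : ellInfty, f ∈ czero → R f ∈ czero) :
    ∃ S₀ S₁ : ellInfty →L[ℝ] ellInfty,
      R = S₀ + S₁ ∧ (∃ b : ℕ → ℕ → ℝ, IsC0Matrix S₀ b) ∧
      (∀ f ∈ czero, S₁ f = 0) := by
  refine ⟨S3Aux.S0 R, R - S3Aux.S0 R, by abel, ⟨S3Aux.b R, ?_, ⟨‖R‖, S3Aux.row_tsum_le R⟩,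
    fun j => h _ (S3Aux.e_mem_czero j), fun f i => S3Aux.S0_apply R f i⟩, fun f hf => ?_⟩
  · exact S3Aux.rows_summable R
  · simp only [ContinuousLinearMap.sub_apply, S3Aux.S0_eq_on_czero R f hf, sub_self]
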